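/- For every quantum channel N from a d_A-dimensional system A (with d_A ≥ 2) to a d_B-dimensional system B, the minimum distinguishability preservation is bounded from below by the minimum causal effect as DP_min(N) ≥ 2·CE_min(N) − 1. -/

import Mathlib

open Matrix ComplexOrder

/-- Trace norm of a square complex matrix. -/
noncomputable def traceNorm {n : Type*} [Fintype n] [DecidableEq n]
    (X : Matrix n n ℂ) : ℝ :=
  (((Matrix.posSemidef_conjTranspose_mul_self X).1.eigenvectorUnitary : Matrix n n ℂ) *
      Matrix.diagonal (((↑) : ℝ → ℂ) ∘ (√·) ∘ (Matrix.posSemidef_conjTranspose_mul_self X).1.eigenvalues) *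
      (star (Matrix.posSemidef_conjTranspose_mul_self X).1.eigenvectorUnitary : Matrix n n ℂ)).trace.re

namespace CEaux

variable {n : Type*} [Fintype n] [DecidableEq n]

open scoped MatrixOrder in
/-- square root of a PSD matrix via the continuous functional calculus. -/
noncomputable def _root_.Matrix.PosSemidef.sqrt {A : Matrix n n ℂ} (_hA : A.PosSemidef) :
    Matrix n n ℂ := CFC.sqrt A

open scoped MatrixOrder in
lemma _root_.Matrix.PosSemidef.posSemidef_sqrt {A : Matrix n n ℂ} (hA : A.PosSemidef) :
    hA.sqrt.PosSemidef :=
  Matrix.nonneg_iff_posSemidef.mp (CFC.sqrt_nonneg A)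

open scoped MatrixOrder in
lemma _root_.Matrix.PosSemidef.sq_sqrt {A : Matrix n n ℂ} (hA : A.PosSemidef) :
    hA.sqrt ^ 2 = A :=
  CFC.sq_sqrt A (Matrix.nonneg_iff_posSemidef.mpr hA)

open scoped MatrixOrder in
lemma _root_.Matrix.PosSemidef.eq_sqrt_of_sq_eq {S : Matrix n n ℂ} (hS : S.PosSemidef)
    {A : Matrix n n ℂ} (hA : A.PosSemidef) (h : S ^ 2 = A) : S = hA.sqrt :=
  (CFC.sqrt_unique (by rw [← sq]; exact h) (Matrix.nonneg_iff_posSemidef.mpr hS)).symm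

open scoped MatrixOrder in
lemma tn_def (X : Matrix n n ℂ) :
    traceNorm X = ((posSemidef_conjTranspose_mul_self X).sqrt.trace).re := by
  have h0 : (0 : Matrix n n ℂ) ≤ Xᴴ * X :=
    Matrix.nonneg_iff_posSemidef.mpr (posSemidef_conjTranspose_mul_self X)
  unfold traceNorm Matrix.PosSemidef.sqrt
  rw [CFC.sqrt_eq_real_sqrt _ h0, cfcₙ_eq_cfc, (posSemidef_conjTranspose_mul_self X).1.cfc_eq]
  rfl

lemma sqrt_congr {A B : Matrix n n ℂ} (h : A = B) (hA : A.PosSemidef) (hB : B.PosSemidef) :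
    hA.sqrt = hB.sqrt := by subst h; rfl

lemma tn_congr {X Y : Matrix n n ℂ} (h : Xᴴ * X = Yᴴ * Y) : traceNorm X = traceNorm Y := by
  rw [tn_def, tn_def]
  rw [sqrt_congr h (posSemidef_conjTranspose_mul_self X) (posSemidef_conjTranspose_mul_self Y)]

lemma tn_neg (X : Matrix n n ℂ) : traceNorm (-X) = traceNorm X :=
  tn_congr (by simp)

/-- trace norm of a PSD matrix is its (real) trace. -/
lemma tn_psd {X : Matrix n n ℂ} (hX : X.PosSemidef) : traceNorm X = X.trace.re := by
  have h : X = (posSemidef_conjTranspose_mul_self X).sqrt :=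
    hX.eq_sqrt_of_sq_eq _ (by rw [pow_two, hX.1])
  rw [tn_def]
  rw [← h]

lemma conj_trace {V : Matrix n n ℂ} (D : Matrix n n ℂ) (hV : Vᴴ * V = 1) :
    (V * D * Vᴴ).trace = D.trace := by
  rw [Matrix.trace_mul_cycle, hV, Matrix.one_mul]

lemma conj_mul {V : Matrix n n ℂ} (D E : Matrix n n ℂ) (hV : Vᴴ * V = 1) :
    (V * D * Vᴴ) * (V * E * Vᴴ) = V * (D * E) * Vᴴ := by
  calc (V * D * Vᴴ) * (V * E * Vᴴ) = V * (D * ((Vᴴ * V) * (E * Vᴴ))) := by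
        simp only [Matrix.mul_assoc]
    _ = V * (D * (E * Vᴴ)) := by rw [hV, Matrix.one_mul]
    _ = V * (D * E) * Vᴴ := by simp only [Matrix.mul_assoc]


variable {A : Matrix n n ℂ}

lemma unit1 (hA : A.IsHermitian) :
    (hA.eigenvectorUnitary : Matrix n n ℂ)ᴴ * (hA.eigenvectorUnitary : Matrix n n ℂ) = 1 := by
  rw [← Matrix.star_eq_conjTranspose]
  exact (Matrix.mem_unitaryGroup_iff').mp (hA.eigenvectorUnitary).2

lemma unit2 (hA : A.IsHermitian) :
    (hA.eigenvectorUnitary : Matrix n n ℂ) * (hA.eigenvectorUnitary : Matrix n n ℂ)ᴴ = 1 := by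
  rw [← Matrix.star_eq_conjTranspose]
  exact (Matrix.mem_unitaryGroup_iff).mp (hA.eigenvectorUnitary).2

lemma spectral (hA : A.IsHermitian) : A = (hA.eigenvectorUnitary : Matrix n n ℂ) *
    diagonal (fun i => (hA.eigenvalues i : ℂ)) * (hA.eigenvectorUnitary : Matrix n n ℂ)ᴴ := by
  rw [← Matrix.star_eq_conjTranspose]
  exact hA.spectral_theorem

lemma conj_diag_psd (hA : A.IsHermitian) (d : n → ℝ) (hd : ∀ i, 0 ≤ d i) :
    Matrix.PosSemidef ((hA.eigenvectorUnitary : Matrix n n ℂ) *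
      diagonal (fun i => (d i : ℂ)) * (hA.eigenvectorUnitary : Matrix n n ℂ)ᴴ) :=
  (Matrix.PosSemidef.diagonal (fun i => Complex.zero_le_real.mpr (hd i))).mul_mul_conjTranspose_same _

lemma herm_trace_eq (hA : A.IsHermitian) : A.trace = ((∑ i, hA.eigenvalues i : ℝ) : ℂ) := by
  conv_lhs => rw [spectral hA]
  rw [conj_trace _ (unit1 hA), Matrix.trace_diagonal]
  push_cast
  rfl

lemma herm_trace_re (hA : A.IsHermitian) : A.trace = ((A.trace.re : ℝ) : ℂ) := by
  rw [herm_trace_eq hA]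
  simp

/-- trace norm of a Hermitian matrix: sum of absolute values of eigenvalues. -/
lemma tn_herm (hA : A.IsHermitian) : traceNorm A = ∑ i, |hA.eigenvalues i| := by
  set V : Matrix n n ℂ := (hA.eigenvectorUnitary : Matrix n n ℂ) with hVdef
  have hV : Vᴴ * V = 1 := unit1 hA
  set S : Matrix n n ℂ := V * diagonal (fun i => ((|hA.eigenvalues i| : ℝ) : ℂ)) * Vᴴ with hSdef
  have hS : S.PosSemidef := conj_diag_psd hA _ (fun i => abs_nonneg _)
  have hsq : S ^ 2 = Aᴴ * A := by
    rw [pow_two, hSdef, conj_mul _ _ hV, hA.eq, diagonal_mul_diagonal]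
    conv_rhs => rw [spectral hA]
    rw [conj_mul _ _ hV, diagonal_mul_diagonal]
    have habs : (fun i => ((|hA.eigenvalues i| : ℝ) : ℂ) * ((|hA.eigenvalues i| : ℝ) : ℂ))
        = fun i => ((hA.eigenvalues i : ℝ) : ℂ) * ((hA.eigenvalues i : ℝ) : ℂ) := by
      funext i
      rw [← Complex.ofReal_mul, ← Complex.ofReal_mul, abs_mul_abs_self]
    rw [habs]
  have h := hS.eq_sqrt_of_sq_eq (posSemidef_conjTranspose_mul_self A) hsq
  rw [tn_def]
  rw [← h, hSdef, conj_trace _ hV, Matrix.trace_diagonal, Complex.re_sum]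
  simp

lemma herm_eq_zero_of_eigen_zero (hA : A.IsHermitian) (h : ∀ i, hA.eigenvalues i = 0) :
    A = 0 := by
  conv_lhs => rw [spectral hA]
  have hzero : (fun i => ((hA.eigenvalues i : ℝ) : ℂ)) = fun _ => (0 : ℂ) := by
    funext i; simp [h i]
  rw [hzero]
  simp

lemma tn_eq_zero_herm (hA : A.IsHermitian) (h : traceNorm A = 0) : A = 0 := by
  rw [tn_herm hA] at h
  refine herm_eq_zero_of_eigen_zero hA (fun i => ?_)
  have h2 := (Finset.sum_eq_zero_iff_of_nonneg (fun i _ => abs_nonneg (hA.eigenvalues i))).mp h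
  exact abs_eq_zero.mp (h2 i (Finset.mem_univ i))


lemma psd_trace_re_nonneg {A : Matrix n n ℂ} (hA : A.PosSemidef) : 0 ≤ A.trace.re := by
  rw [herm_trace_eq hA.1]
  simp only [Complex.ofReal_re]
  exact Finset.sum_nonneg (fun i _ => hA.eigenvalues_nonneg i)

lemma psd_eq_zero_of_trace {A : Matrix n n ℂ} (hA : A.PosSemidef) (h : A.trace.re = 0) :
    A = 0 := by
  rw [herm_trace_eq hA.1] at h
  simp only [Complex.ofReal_re] at h
  refine herm_eq_zero_of_eigen_zero hA.1 (fun i => ?_)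
  have := (Finset.sum_eq_zero_iff_of_nonneg (fun i _ => hA.eigenvalues_nonneg i)).mp h
  exact this i (Finset.mem_univ i)

lemma tn_nonneg (X : Matrix n n ℂ) : 0 ≤ traceNorm X := by
  rw [tn_def]; exact psd_trace_re_nonneg (posSemidef_conjTranspose_mul_self X).posSemidef_sqrt

/-- PSD scaled by a nonneg real is PSD. -/
lemma psd_smul {A : Matrix n n ℂ} (hA : A.PosSemidef) {r : ℝ} (hr : 0 ≤ r) :
    (((r : ℂ)) • A).PosSemidef := by
  exact hA.smul (Complex.zero_le_real.mpr hr)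

/-- scaling of the trace norm by a real scalar. -/
lemma tn_smul (r : ℝ) (X : Matrix n n ℂ) :
    traceNorm ((r : ℂ) • X) = |r| * traceNorm X := by
  set S := (posSemidef_conjTranspose_mul_self X).sqrt with hSdef
  have hS := (posSemidef_conjTranspose_mul_self X).posSemidef_sqrt
  have hS2 : S ^ 2 = Xᴴ * X := (posSemidef_conjTranspose_mul_self X).sq_sqrt
  have hT : (((|r| : ℝ) : ℂ) • S).PosSemidef := psd_smul hS (abs_nonneg r)
  have hsq : (((|r| : ℝ) : ℂ) • S) ^ 2 = ((r : ℂ) • X)ᴴ * ((r : ℂ) • X) := by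
    rw [smul_pow, hS2, Matrix.conjTranspose_smul, Matrix.smul_mul, Matrix.mul_smul,
      smul_smul]
    congr 1
    simp only [Complex.star_def, Complex.conj_ofReal]
    rw [← Complex.ofReal_pow, ← Complex.ofReal_mul, sq_abs, ← pow_two]
  have h := hT.eq_sqrt_of_sq_eq (posSemidef_conjTranspose_mul_self ((r : ℂ) • X)) hsq
  rw [tn_def, tn_def]
  rw [← h, Matrix.trace_smul, smul_eq_mul, Complex.re_ofReal_mul]

/-- Jordan decomposition of a Hermitian matrix. -/
lemma jordan {A : Matrix n n ℂ} (hA : A.IsHermitian) :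
    ∃ P Q : Matrix n n ℂ, P.PosSemidef ∧ Q.PosSemidef ∧ A = P - Q ∧ P * Q = 0 ∧
      traceNorm A = P.trace.re + Q.trace.re := by
  set V : Matrix n n ℂ := (hA.eigenvectorUnitary : Matrix n n ℂ) with hVdef
  have hV : Vᴴ * V = 1 := unit1 hA
  refine ⟨V * diagonal (fun i => ((max (hA.eigenvalues i) 0 : ℝ) : ℂ)) * Vᴴ,
    V * diagonal (fun i => ((max (-hA.eigenvalues i) 0 : ℝ) : ℂ)) * Vᴴ,
    conj_diag_psd hA _ (fun i => le_max_right _ _),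
    conj_diag_psd hA _ (fun i => le_max_right _ _), ?_, ?_, ?_⟩
  · conv_lhs => rw [spectral hA]
    rw [← Matrix.sub_mul, ← Matrix.mul_sub, Matrix.diagonal_sub]
    have heq : (fun i => ((hA.eigenvalues i : ℝ) : ℂ)) =
        ((fun i => ((max (hA.eigenvalues i) 0 : ℝ) : ℂ)) -
         (fun i => ((max (-hA.eigenvalues i) 0 : ℝ) : ℂ))) := by
      funext i
      simp only [Pi.sub_apply]
      norm_cast
      rcases le_total (hA.eigenvalues i) 0 with h | h
      · rw [max_eq_right h, max_eq_left (by linarith)]; ring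
      · rw [max_eq_left h, max_eq_right (by linarith)]; ring
    rw [heq]
    rfl
  · rw [conj_mul _ _ hV, diagonal_mul_diagonal]
    have : (fun i => ((max (hA.eigenvalues i) 0 : ℝ) : ℂ) * ((max (-hA.eigenvalues i) 0 : ℝ) : ℂ))
        = fun _ => (0 : ℂ) := by
      funext i
      rcases le_total (hA.eigenvalues i) 0 with h | h
      · rw [max_eq_right h]; simp
      · rw [max_eq_right (neg_nonpos.mpr h)]; simp
    rw [this, Matrix.diagonal_zero, Matrix.mul_zero, Matrix.zero_mul]
  · rw [tn_herm hA, conj_trace _ hV, conj_trace _ hV, Matrix.trace_diagonal,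
      Matrix.trace_diagonal, Complex.re_sum, Complex.re_sum, ← Finset.sum_add_distrib]
    refine Finset.sum_congr rfl (fun i _ => ?_)
    simp only [Complex.ofReal_re]
    rcases le_total (hA.eigenvalues i) 0 with h | h
    · rw [abs_of_nonpos h, max_eq_right h, max_eq_left (by linarith)]; ring
    · rw [abs_of_nonneg h, max_eq_left h, max_eq_right (neg_nonpos.mpr h)]; ring


/-- trace norm of difference of PSD matrices with orthogonal ranges. -/
lemma tn_orth {P Q : Matrix n n ℂ} (hP : P.PosSemidef) (hQ : Q.PosSemidef)
    (hPQ : P * Q = 0) : traceNorm (P - Q) = P.trace.re + Q.trace.re := by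
  have hQP : Q * P = 0 := by
    have := congrArg Matrix.conjTranspose hPQ
    rwa [Matrix.conjTranspose_mul, hP.1, hQ.1, Matrix.conjTranspose_zero] at this
  have hherm : (P - Q).IsHermitian := hP.1.sub hQ.1
  have hsq : (P + Q) ^ 2 = (P - Q)ᴴ * (P - Q) := by
    rw [hherm.eq, pow_two, add_mul, mul_add, mul_add, hPQ, hQP,
      sub_mul, mul_sub, mul_sub, hPQ, hQP]
    noncomm_ring
  have h := (hP.add hQ).eq_sqrt_of_sq_eq (posSemidef_conjTranspose_mul_self (P - Q)) hsq
  rw [tn_def]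
  rw [← h, Matrix.trace_add, Complex.add_re]

lemma psd_diag_nonneg {M : Matrix n n ℂ} (hM : M.PosSemidef) (i : n) :
    0 ≤ M i i := by
  exact hM.diag_nonneg

lemma trace_re_eq_sum (M : Matrix n n ℂ) : M.trace.re = ∑ i, (M i i).re := by
  rw [Matrix.trace, Complex.re_sum]
  rfl

/-- Any PSD decomposition bounds the trace norm of a Hermitian matrix. -/
lemma tn_le_decomp {P Q : Matrix n n ℂ} (hP : P.PosSemidef) (hQ : Q.PosSemidef) :
    traceNorm (P - Q) ≤ P.trace.re + Q.trace.re := by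
  have hherm : (P - Q).IsHermitian := hP.1.sub hQ.1
  set V : Matrix n n ℂ := (hherm.eigenvectorUnitary : Matrix n n ℂ) with hVdef
  have hV2 : V * Vᴴ = 1 := unit2 hherm
  have hdiag : Vᴴ * (P - Q) * V = diagonal (fun i => ((hherm.eigenvalues i : ℝ) : ℂ)) := by
    rw [← Matrix.star_eq_conjTranspose]
    have := hherm.conjStarAlgAut_star_eigenvectorUnitary
    rw [Unitary.conjStarAlgAut_apply, Unitary.coe_star, star_star] at this
    exact this
  have hP' : (Vᴴ * P * V).PosSemidef := hP.conjTranspose_mul_mul_same V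
  have hQ' : (Vᴴ * Q * V).PosSemidef := hQ.conjTranspose_mul_mul_same V
  have htrP : (Vᴴ * P * V).trace = P.trace := by
    rw [Matrix.trace_mul_cycle, hV2, Matrix.one_mul]
  have htrQ : (Vᴴ * Q * V).trace = Q.trace := by
    rw [Matrix.trace_mul_cycle, hV2, Matrix.one_mul]
  have hentry : ∀ i, (hherm.eigenvalues i : ℝ) =
      ((Vᴴ * P * V) i i).re - ((Vᴴ * Q * V) i i).re := by
    intro i
    have h1 : (Vᴴ * P * V) i i - (Vᴴ * Q * V) i i = ((hherm.eigenvalues i : ℝ) : ℂ) := by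
      have : (Vᴴ * P * V) - (Vᴴ * Q * V) = diagonal (fun i => ((hherm.eigenvalues i : ℝ) : ℂ)) := by
        rw [← hdiag, Matrix.mul_sub, Matrix.sub_mul]
      have := congrFun (congrFun this i) i
      simpa [Matrix.diagonal_apply_eq] using this
    have := congrArg Complex.re h1
    simpa [Complex.sub_re] using this.symm
  rw [tn_herm hherm, ← htrP, ← htrQ, trace_re_eq_sum, trace_re_eq_sum,
    ← Finset.sum_add_distrib]
  refine Finset.sum_le_sum (fun i _ => ?_)
  have hp := psd_diag_nonneg hP' i
  have hq := psd_diag_nonneg hQ' i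
  rw [Complex.le_def] at hp hq
  simp only [Complex.zero_re, Complex.zero_im] at hp hq
  rw [hentry i]
  have h1 : 0 ≤ ((Vᴴ * P * V) i i).re := hp.1
  have h2 : 0 ≤ ((Vᴴ * Q * V) i i).re := hq.1
  rw [abs_le]
  constructor <;> linarith

/-- Triangle inequality for the trace norm of Hermitian matrices. -/
lemma tn_triangle {A B : Matrix n n ℂ} (hA : A.IsHermitian) (hB : B.IsHermitian) :
    traceNorm (A + B) ≤ traceNorm A + traceNorm B := by
  obtain ⟨P1, Q1, hP1, hQ1, hd1, -, ht1⟩ := jordan hA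
  obtain ⟨P2, Q2, hP2, hQ2, hd2, -, ht2⟩ := jordan hB
  have hsum : A + B = (P1 + P2) - (Q1 + Q2) := by rw [hd1, hd2]; abel
  calc traceNorm (A + B) = traceNorm ((P1 + P2) - (Q1 + Q2)) := by rw [hsum]
    _ ≤ (P1 + P2).trace.re + (Q1 + Q2).trace.re := tn_le_decomp (hP1.add hP2) (hQ1.add hQ2)
    _ = (P1.trace.re + Q1.trace.re) + (P2.trace.re + Q2.trace.re) := by
        rw [Matrix.trace_add, Matrix.trace_add, Complex.add_re, Complex.add_re]; ring
    _ = traceNorm A + traceNorm B := by rw [ht1, ht2]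

end CEaux

/-- A density matrix: positive semidefinite with unit trace. -/
def IsDensityMatrix {n : Type*} [Fintype n] [DecidableEq n] (ρ : Matrix n n ℂ) : Prop :=
  ρ.PosSemidef ∧ ρ.trace = 1

/-- A quantum channel: a linear map admitting a Kraus representation. -/
def IsQuantumChannel {dA dB : ℕ}
    (N : Matrix (Fin dA) (Fin dA) ℂ →ₗ[ℂ] Matrix (Fin dB) (Fin dB) ℂ) : Prop :=
  ∃ (k : ℕ) (K : Fin k → Matrix (Fin dB) (Fin dA) ℂ),
    (∀ X, N X = ∑ i, K i * X * (K i)ᴴ) ∧ (∑ i, (K i)ᴴ * K i = 1)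

/-- Maximum causal effect. -/
noncomputable def CEmax {dA dB : ℕ}
    (N : Matrix (Fin dA) (Fin dA) ℂ →ₗ[ℂ] Matrix (Fin dB) (Fin dB) ℂ) : ℝ :=
  sSup {x : ℝ | ∃ ρ ρ' : Matrix (Fin dA) (Fin dA) ℂ,
    IsDensityMatrix ρ ∧ IsDensityMatrix ρ' ∧ ρ ≠ ρ' ∧
    x = traceNorm (N ρ - N ρ') / traceNorm (ρ - ρ')}

/-- Minimum causal effect. -/
noncomputable def CEmin {dA dB : ℕ}
    (N : Matrix (Fin dA) (Fin dA) ℂ →ₗ[ℂ] Matrix (Fin dB) (Fin dB) ℂ) : ℝ :=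
  sInf {x : ℝ | ∃ ρ ρ' : Matrix (Fin dA) (Fin dA) ℂ,
    IsDensityMatrix ρ ∧ IsDensityMatrix ρ' ∧ ρ ≠ ρ' ∧
    x = traceNorm (N ρ - N ρ') / traceNorm (ρ - ρ')}

/-- Minimum distinguishability preservation. -/
noncomputable def DPmin {dA dB : ℕ}
    (N : Matrix (Fin dA) (Fin dA) ℂ →ₗ[ℂ] Matrix (Fin dB) (Fin dB) ℂ) : ℝ :=
  sInf {x : ℝ | ∃ p : ℝ, 0 ≤ p ∧ p ≤ 1 ∧
    ∃ ρ ρ' : Matrix (Fin dA) (Fin dA) ℂ,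
      IsDensityMatrix ρ ∧ IsDensityMatrix ρ' ∧ ρ ≠ ρ' ∧
      x = traceNorm ((p : ℂ) • N ρ - ((1 - p : ℝ) : ℂ) • N ρ') /
          traceNorm ((p : ℂ) • ρ - ((1 - p : ℝ) : ℂ) • ρ')}

namespace CEaux

variable {dA dB : ℕ} {N : Matrix (Fin dA) (Fin dA) ℂ →ₗ[ℂ] Matrix (Fin dB) (Fin dB) ℂ}

lemma channel_psd (hN : IsQuantumChannel N) {X : Matrix (Fin dA) (Fin dA) ℂ}
    (hX : X.PosSemidef) : (N X).PosSemidef := by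
  obtain ⟨k, K, hK, -⟩ := hN
  rw [hK]
  exact Finset.sum_induction _ _ (fun a b ha hb => ha.add hb) Matrix.PosSemidef.zero
    (fun i _ => hX.mul_mul_conjTranspose_same (K i))

lemma channel_trace (hN : IsQuantumChannel N) (X : Matrix (Fin dA) (Fin dA) ℂ) :
    (N X).trace = X.trace := by
  obtain ⟨k, K, hK, hsum⟩ := hN
  rw [hK, Matrix.trace_sum]
  calc ∑ i, (K i * X * (K i)ᴴ).trace = ∑ i, ((K i)ᴴ * K i * X).trace := by
        refine Finset.sum_congr rfl (fun i _ => ?_)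
        rw [Matrix.trace_mul_cycle]
    _ = ((∑ i, (K i)ᴴ * K i) * X).trace := by
        rw [← Matrix.trace_sum, Finset.sum_mul]
    _ = X.trace := by rw [hsum, Matrix.one_mul]

lemma tn_density {n : Type*} [Fintype n] [DecidableEq n] {ρ : Matrix n n ℂ}
    (hρ : IsDensityMatrix ρ) : traceNorm ρ = 1 := by
  rw [tn_psd hρ.1, hρ.2, Complex.one_re]

/-- The key estimate: for PSD `A`, `B` with `B` of unit trace and `b ≤ a`,
`(2c-1)(a+b) ≤ ‖a•A - b•B‖₁` provided `c ≤ 1` and `2c ≤ ‖A - B‖₁`. -/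
lemma key {m : Type*} [Fintype m] [DecidableEq m] {A B : Matrix m m ℂ}
    (hA : A.PosSemidef) (hB : B.PosSemidef) (htB : B.trace.re = 1)
    {a b cc : ℝ} (hb : 0 ≤ b) (hab : b ≤ a) (hc1 : cc ≤ 1)
    (hw : 2 * cc ≤ traceNorm (A - B)) :
    (2 * cc - 1) * (a + b) ≤ traceNorm ((a : ℂ) • A - (b : ℂ) • B) := by
  have ha : 0 ≤ a := le_trans hb hab
  have hherm1 : (((a : ℝ) : ℂ) • A - ((b : ℝ) : ℂ) • B).IsHermitian :=
    ((psd_smul hA ha).1).sub ((psd_smul hB hb).1)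
  have hherm2 : ((((a - b : ℝ)) : ℂ) • B).IsHermitian := (psd_smul hB (by linarith)).1
  have hid : ((a : ℝ) : ℂ) • (A - B) =
      (((a : ℝ) : ℂ) • A - ((b : ℝ) : ℂ) • B) + (-((((a - b : ℝ)) : ℂ) • B)) := by
    push_cast
    module
  have h1 : traceNorm (((a : ℝ) : ℂ) • (A - B)) = a * traceNorm (A - B) := by
    rw [tn_smul, abs_of_nonneg ha]
  have h2 : traceNorm (-((((a - b : ℝ)) : ℂ) • B)) = a - b := by
    rw [tn_neg, tn_smul, abs_of_nonneg (by linarith : (0:ℝ) ≤ a - b), tn_psd hB, htB, mul_one]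
  have h3 := tn_triangle hherm1 hherm2.neg
  rw [← hid, h1, h2] at h3
  have e1 : 2 * cc * a ≤ a * traceNorm (A - B) := by
    rw [mul_comm 2 cc, mul_comm a]
    exact mul_le_mul_of_nonneg_right (by linarith) ha
  have e2 : 0 ≤ b * (1 - cc) := mul_nonneg hb (by linarith)
  nlinarith [h3, e1, e2]

end CEaux

open CEaux in
/-- **Lower bound on distinguishability preservation via the minimum causal effect.**
For every quantum channel `N : A → B` (`dA ≥ 2`), `DPmin N ≥ 2·CEmin N − 1`. -/
theorem DPmin_ge_two_CEmin_sub_one {dA dB : ℕ} (hdA : 2 ≤ dA)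
    (N : Matrix (Fin dA) (Fin dA) ℂ →ₗ[ℂ] Matrix (Fin dB) (Fin dB) ℂ)
    (hN : IsQuantumChannel N) :
    2 * CEmin N - 1 ≤ DPmin N := by
  classical
  set CEset : Set ℝ := {x : ℝ | ∃ ρ ρ' : Matrix (Fin dA) (Fin dA) ℂ,
    IsDensityMatrix ρ ∧ IsDensityMatrix ρ' ∧ ρ ≠ ρ' ∧
    x = traceNorm (N ρ - N ρ') / traceNorm (ρ - ρ')} with hCEset
  have hc_def : CEmin N = sInf CEset := rfl
  set c : ℝ := CEmin N with hcdef
  -- base pair of distinct orthogonal density matrices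
  have h0 : (0 : ℕ) < dA := by omega
  have h1 : (1 : ℕ) < dA := by omega
  set i0 : Fin dA := ⟨0, h0⟩
  set i1 : Fin dA := ⟨1, h1⟩
  have hi01 : i0 ≠ i1 := by simp [i0, i1, Fin.ext_iff]
  set ρ₀ : Matrix (Fin dA) (Fin dA) ℂ := Matrix.diagonal (Pi.single i0 1) with hρ₀def
  set ρ₁ : Matrix (Fin dA) (Fin dA) ℂ := Matrix.diagonal (Pi.single i1 1) with hρ₁def
  have hdens : ∀ i : Fin dA, IsDensityMatrix (Matrix.diagonal (Pi.single i (1:ℂ))) := by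
    intro i
    constructor
    · refine Matrix.PosSemidef.diagonal (fun j => ?_)
      rcases eq_or_ne j i with h | h
      · subst h; simp
      · simp [Pi.single_apply, h]
    · rw [Matrix.trace_diagonal]
      simp
  have hρ₀ : IsDensityMatrix ρ₀ := hdens i0
  have hρ₁ : IsDensityMatrix ρ₁ := hdens i1
  have hne01 : ρ₀ ≠ ρ₁ := by
    intro h
    have h2 := congrFun (congrFun h i0) i0
    rw [hρ₀def, hρ₁def] at h2
    simp [Matrix.diagonal_apply_eq, Pi.single_apply, hi01] at h2
  have horth : ρ₀ * ρ₁ = 0 := by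
    rw [hρ₀def, hρ₁def, Matrix.diagonal_mul_diagonal]
    have hsingle : ∀ j, (Pi.single i0 (1:ℂ) : Fin dA → ℂ) j * (Pi.single i1 (1:ℂ) : Fin dA → ℂ) j = 0 := by
      intro j
      rcases eq_or_ne j i0 with h | h
      · subst h; simp [Pi.single_apply, Ne.symm hi01]
      · simp [Pi.single_apply, h]
    simp only [hsingle, Matrix.diagonal_zero]
  have htn01 : traceNorm (ρ₀ - ρ₁) = 2 := by
    rw [tn_orth hρ₀.1 hρ₁.1 horth, hρ₀.2, hρ₁.2]
    norm_num
  have hbdd : BddBelow CEset := by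
    refine ⟨0, fun x hx => ?_⟩
    obtain ⟨ρ, ρ', _, _, _, rfl⟩ := hx
    exact div_nonneg (tn_nonneg _) (tn_nonneg _)
  have hmem0 : traceNorm (N ρ₀ - N ρ₁) / traceNorm (ρ₀ - ρ₁) ∈ CEset :=
    ⟨ρ₀, ρ₁, hρ₀, hρ₁, hne01, rfl⟩
  have hc1 : c ≤ 1 := by
    refine le_trans (csInf_le hbdd hmem0 : sInf CEset ≤ _) ?_
    rw [htn01]
    have hub : traceNorm (N ρ₀ - N ρ₁) ≤ 2 := by
      have hps0 := channel_psd hN hρ₀.1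
      have hps1 := channel_psd hN hρ₁.1
      have h3 : traceNorm (N ρ₀ + -(N ρ₁)) ≤ traceNorm (N ρ₀) + traceNorm (-(N ρ₁)) :=
        tn_triangle hps0.1 hps1.1.neg
      rw [tn_neg, tn_psd hps0, tn_psd hps1, channel_trace hN, channel_trace hN,
        hρ₀.2, hρ₁.2] at h3
      simp only [Complex.one_re] at h3
      rw [sub_eq_add_neg]
      linarith
    linarith [div_le_one (show (0:ℝ) < 2 by norm_num) |>.mpr hub]
  -- main bound on every element of the DP set
  unfold DPmin
  refine le_csInf ⟨_, 0, le_refl 0, zero_le_one, ρ₀, ρ₁, hρ₀, hρ₁, hne01, rfl⟩ ?_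
  rintro x ⟨p, hp0, hp1, ρ, ρ', hρ, hρ', hne, rfl⟩
  rcases le_or_gt (2 * c - 1) 0 with hcneg | hcpos
  · exact le_trans hcneg (div_nonneg (tn_nonneg _) (tn_nonneg _))
  set X : Matrix (Fin dA) (Fin dA) ℂ := (p : ℂ) • ρ - ((1 - p : ℝ) : ℂ) • ρ' with hXdef
  have hXherm : X.IsHermitian := ((psd_smul hρ.1 hp0).1).sub ((psd_smul hρ'.1 (by linarith)).1)
  have hNX : N X = (p : ℂ) • N ρ - ((1 - p : ℝ) : ℂ) • N ρ' := by
    rw [hXdef, LinearMap.map_sub, LinearMap.map_smul, LinearMap.map_smul]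
  have hXne : X ≠ 0 := by
    intro h
    have htr : X.trace = 0 := by rw [h, Matrix.trace_zero]
    rw [hXdef, Matrix.trace_sub, Matrix.trace_smul, Matrix.trace_smul, hρ.2, hρ'.2,
      smul_eq_mul, smul_eq_mul, mul_one, mul_one] at htr
    have hp : p = 1/2 := by
      push_cast at htr
      have h2 : ((2*p - 1 : ℝ) : ℂ) = 0 := by push_cast; linear_combination htr
      have := Complex.ofReal_eq_zero.mp h2
      linarith
    rw [hXdef, hp] at h
    norm_num at h
    have : ρ = ρ' := by
      have h' : ((1:ℂ)/2) • ρ = ((1:ℂ)/2) • ρ' := by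
        have := sub_eq_zero.mp h
        convert this using 2 <;> norm_num
      exact smul_right_injective _ (by norm_num : ((1:ℂ)/2) ≠ 0) h'
    exact hne this
  have hD : 0 < traceNorm X :=
    lt_of_le_of_ne (tn_nonneg X) (fun h => hXne (tn_eq_zero_herm hXherm h.symm))
  rw [show (p : ℂ) • N ρ - ((1 - p : ℝ) : ℂ) • N ρ' = N X from hNX.symm]
  rw [le_div_iff₀ hD]
  obtain ⟨P, Q, hP, hQ, hdec, hPQ0, htnX⟩ := jordan hXherm
  set a : ℝ := P.trace.re with hadef
  set b : ℝ := Q.trace.re with hbdef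
  have ha0 : 0 ≤ a := psd_trace_re_nonneg hP
  have hb0 : 0 ≤ b := psd_trace_re_nonneg hQ
  rcases eq_or_lt_of_le hb0 with hb | hb
  · -- the negative part vanishes
    have hQ0 : Q = 0 := psd_eq_zero_of_trace hQ hb.symm
    have hXP : X = P := by rw [hdec, hQ0, sub_zero]
    have h4 : traceNorm (N X) = a := by
      rw [hXP, tn_psd (channel_psd hN hP), channel_trace hN]
    rw [htnX, h4]
    nlinarith [ha0, hc1, hb]
  · rcases eq_or_lt_of_le ha0 with ha | ha
    · -- the positive part vanishes
      have hP0 : P = 0 := psd_eq_zero_of_trace hP ha.symm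
      have hXQ : X = -Q := by rw [hdec, hP0, zero_sub]
      have h4 : traceNorm (N X) = b := by
        rw [hXQ, LinearMap.map_neg, tn_neg, tn_psd (channel_psd hN hQ), channel_trace hN]
      rw [htnX, h4]
      nlinarith [hb0, hc1, ha]
    · -- both parts present: normalize to density matrices
      set σ : Matrix (Fin dA) (Fin dA) ℂ := ((a⁻¹ : ℝ) : ℂ) • P with hσdef
      set σ' : Matrix (Fin dA) (Fin dA) ℂ := ((b⁻¹ : ℝ) : ℂ) • Q with hσ'def
      have hσp : σ.PosSemidef := psd_smul hP (inv_nonneg.mpr ha0)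
      have hσ'p : σ'.PosSemidef := psd_smul hQ (inv_nonneg.mpr hb0)
      have htrP : P.trace = ((a : ℝ) : ℂ) := herm_trace_re hP.1
      have htrQ : Q.trace = ((b : ℝ) : ℂ) := herm_trace_re hQ.1
      have hσd : IsDensityMatrix σ := by
        refine ⟨hσp, ?_⟩
        rw [hσdef, Matrix.trace_smul, htrP, smul_eq_mul, ← Complex.ofReal_mul,
          inv_mul_cancel₀ (ne_of_gt ha), Complex.ofReal_one]
      have hσ'd : IsDensityMatrix σ' := by
        refine ⟨hσ'p, ?_⟩
        rw [hσ'def, Matrix.trace_smul, htrQ, smul_eq_mul, ← Complex.ofReal_mul,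
          inv_mul_cancel₀ (ne_of_gt hb), Complex.ofReal_one]
      have hPσ : P = ((a : ℝ) : ℂ) • σ := by
        rw [hσdef, smul_smul, ← Complex.ofReal_mul, mul_inv_cancel₀ (ne_of_gt ha),
          Complex.ofReal_one, one_smul]
      have hQσ' : Q = ((b : ℝ) : ℂ) • σ' := by
        rw [hσ'def, smul_smul, ← Complex.ofReal_mul, mul_inv_cancel₀ (ne_of_gt hb),
          Complex.ofReal_one, one_smul]
      have hσσ'mul : σ * σ' = 0 := by
        rw [hσdef, hσ'def, Matrix.smul_mul, Matrix.mul_smul, hPQ0, smul_zero, smul_zero]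
      have hσne : σ ≠ σ' := by
        intro h
        have hmul : σ * σ = 0 := by rw [← h] at hσσ'mul; exact hσσ'mul
        have hzero : σ = 0 := by
          refine Matrix.conjTranspose_mul_self_eq_zero.mp ?_
          rw [hσp.1]
          exact hmul
        have : (1 : ℂ) = 0 := by rw [← hσd.2, hzero, Matrix.trace_zero]
        exact one_ne_zero this
      have hu : traceNorm (σ - σ') = 2 := by
        rw [tn_orth hσp hσ'p hσσ'mul, hσd.2, hσ'd.2]
        norm_num
      have hmem1 : traceNorm (N σ - N σ') / traceNorm (σ - σ') ∈ CEset :=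
        ⟨σ, σ', hσd, hσ'd, hσne, rfl⟩
      have hcw : 2 * c ≤ traceNorm (N σ - N σ') := by
        have hle : c ≤ traceNorm (N σ - N σ') / traceNorm (σ - σ') :=
          csInf_le hbdd hmem1
        rw [hu] at hle
        linarith
      have hXsplit : N X = ((a : ℝ) : ℂ) • N σ - ((b : ℝ) : ℂ) • N σ' := by
        rw [hdec]
        conv_lhs => rw [hPσ, hQσ']
        simp only [LinearMap.map_sub, LinearMap.map_smul]
      have htB' : (N σ').trace.re = 1 := by
        rw [channel_trace hN, hσ'd.2, Complex.one_re]
      have htB'' : (N σ).trace.re = 1 := by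
        rw [channel_trace hN, hσd.2, Complex.one_re]
      rw [htnX]
      rcases le_total b a with hab | hab
      · rw [hXsplit]
        exact key (channel_psd hN hσd.1) (channel_psd hN hσ'd.1) htB' hb0 hab hc1 hcw
      · have hflip : N X = -(((b : ℝ) : ℂ) • N σ' - ((a : ℝ) : ℂ) • N σ) := by
          rw [hXsplit, neg_sub]
        rw [hflip, tn_neg]
        have hw' : 2 * c ≤ traceNorm (N σ' - N σ) := by
          rw [show N σ' - N σ = -(N σ - N σ') from (neg_sub _ _).symm, tn_neg]
          exact hcw
        have hkey := key (channel_psd hN hσ'd.1) (channel_psd hN hσd.1) htB'' ha0 hab hc1 hw'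
        linarith [hkey]
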